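/- Define G₁ : ℝ³ → ℝ by G₁(x₁, p, q) = 45·(1−x₁) + 5·x₁ + (95·x₁ − 45·(1−x₁))·p + (20·(1−x₁) − 5·x₁)·q − 5·x₁·p·q − 10·(1−x₁)·q², and G₂ : ℝ³ → ℝ by G₂(x₂, p, q) = 50·x₂ + 50·x₂·p + (200·(1−x₂) − 50·x₂)·q − 50·x₂·p·q − 100·(1−x₂)·q². Then [the supremum over x₁ ∈ [0,1] of the infimum, over all finitely supported probability distributions μ on [1/10, 9/10]², of E_μ[(p,q) ↦ G₁(x₁, p, q)]] plus [the supremum over x₂ ∈ [0,1] of the infimum, over all finitely supported probability distributions μ on [1/10, 9/10]², of E_μ[(p,q) ↦ G₂(x₂, p, q)]] equals 719/10 (i.e., 71.9). -/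

import Mathlib

/-- A finitely supported probability distribution on a set `S`. -/
def IsFinProbDist {α : Type*} (S : Set α) (μ : α →₀ ℝ) : Prop :=
  (∀ u, 0 ≤ μ u) ∧ ↑μ.support ⊆ S ∧ (∑ u ∈ μ.support, μ u) = 1

/-- Expectation of `g` under a finitely supported distribution `μ`. -/
noncomputable def expect {α : Type*} (μ : α →₀ ℝ) (g : α → ℝ) : ℝ :=
  ∑ u ∈ μ.support, μ u * g u

noncomputable def G₁ (x₁ p q : ℝ) : ℝ :=
  45 * (1 - x₁) + 5 * x₁ + (95 * x₁ - 45 * (1 - x₁)) * p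
    + (20 * (1 - x₁) - 5 * x₁) * q - 5 * x₁ * (p * q) - 10 * (1 - x₁) * q ^ 2

noncomputable def G₂ (x₂ p q : ℝ) : ℝ :=
  50 * x₂ + 50 * x₂ * p + (200 * (1 - x₂) - 50 * x₂) * q
    - 50 * x₂ * (p * q) - 100 * (1 - x₂) * q ^ 2

lemma expect_ge {α : Type*} {S : Set α} {μ : α →₀ ℝ} (h : IsFinProbDist S μ)
    {g : α → ℝ} {m : ℝ} (hg : ∀ u ∈ S, m ≤ g u) : m ≤ expect μ g := by
  obtain ⟨h0, hS, h1⟩ := h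
  calc m = ∑ u ∈ μ.support, μ u * m := by rw [← Finset.sum_mul, h1, one_mul]
    _ ≤ expect μ g := by
        apply Finset.sum_le_sum
        intro u hu
        exact mul_le_mul_of_nonneg_left (hg u (hS hu)) (h0 u)

lemma dirac_isProbDist {α : Type*} {S : Set α} {a : α} (ha : a ∈ S) :
    IsFinProbDist S (Finsupp.single a 1) := by
  refine ⟨fun u => ?_, ?_, ?_⟩
  · rcases eq_or_ne u a with rfl | h
    · simp
    · rw [Finsupp.single_eq_of_ne' (Ne.symm h)]
  · rw [Finsupp.support_single_ne_zero a one_ne_zero]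
    intro u hu
    rcases Finset.mem_coe.mp hu with h
    rw [Finset.mem_singleton] at h
    exact h ▸ ha
  · rw [Finsupp.support_single_ne_zero a one_ne_zero]; simp

lemma expect_dirac {α : Type*} (a : α) (g : α → ℝ) :
    expect (Finsupp.single a 1) g = g a := by
  rw [expect, Finsupp.support_single_ne_zero a one_ne_zero]
  simp

lemma sup_inf_eq (G : ℝ → ℝ × ℝ → ℝ) (x₀ v : ℝ) (hx₀ : x₀ ∈ Set.Icc (0:ℝ) 1)
    (hlb : ∀ u ∈ Set.Icc (1/10 : ℝ) (9/10) ×ˢ Set.Icc (1/10 : ℝ) (9/10), v ≤ G x₀ u)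
    (hatt : ∃ u ∈ Set.Icc (1/10 : ℝ) (9/10) ×ˢ Set.Icc (1/10 : ℝ) (9/10), G x₀ u = v)
    (hle : ∀ x ∈ Set.Icc (0:ℝ) 1,
      ∃ u ∈ Set.Icc (1/10 : ℝ) (9/10) ×ˢ Set.Icc (1/10 : ℝ) (9/10), G x u ≤ v)
    (hbdd : ∀ x ∈ Set.Icc (0:ℝ) 1,
      ∀ u ∈ Set.Icc (1/10 : ℝ) (9/10) ×ˢ Set.Icc (1/10 : ℝ) (9/10), (-1000 : ℝ) ≤ G x u) :
    sSup {v' : ℝ | ∃ x ∈ Set.Icc (0 : ℝ) 1,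
        v' = sInf {w : ℝ | ∃ μ : (ℝ × ℝ) →₀ ℝ,
          IsFinProbDist (Set.Icc (1/10 : ℝ) (9/10) ×ˢ Set.Icc (1/10 : ℝ) (9/10)) μ ∧
          w = expect μ (G x)}} = v := by
  set sq := Set.Icc (1/10 : ℝ) (9/10) ×ˢ Set.Icc (1/10 : ℝ) (9/10) with hsq
  set W : ℝ → Set ℝ := fun x => {w : ℝ | ∃ μ : (ℝ × ℝ) →₀ ℝ,
      IsFinProbDist sq μ ∧ w = expect μ (G x)} with hW
  have hbddW : ∀ x ∈ Set.Icc (0:ℝ) 1, BddBelow (W x) := by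
    intro x hx
    refine ⟨-1000, fun w hw => ?_⟩
    obtain ⟨μ, hμ, rfl⟩ := hw
    exact expect_ge hμ (hbdd x hx)
  -- sInf at x₀ equals v
  have hinf : sInf (W x₀) = v := by
    obtain ⟨u, hu, huv⟩ := hatt
    apply le_antisymm
    · have : v ∈ W x₀ := ⟨Finsupp.single u 1, dirac_isProbDist hu, by
        rw [expect_dirac, huv]⟩
      exact csInf_le (hbddW x₀ hx₀) this
    · apply le_csInf
      · exact ⟨v, Finsupp.single u 1, dirac_isProbDist hu, by rw [expect_dirac, huv]⟩
      · rintro w ⟨μ, hμ, rfl⟩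
        exact expect_ge hμ hlb
  have hub : ∀ w ∈ {v' : ℝ | ∃ x ∈ Set.Icc (0 : ℝ) 1, v' = sInf (W x)}, w ≤ v := by
    rintro w ⟨x, hx, rfl⟩
    obtain ⟨u, hu, huv⟩ := hle x hx
    have hmem : expect (Finsupp.single u 1) (G x) ∈ W x :=
      ⟨Finsupp.single u 1, dirac_isProbDist hu, rfl⟩
    calc sInf (W x) ≤ expect (Finsupp.single u 1) (G x) := csInf_le (hbddW x hx) hmem
      _ = G x u := expect_dirac u _
      _ ≤ v := huv
  apply le_antisymm
  · exact csSup_le ⟨sInf (W x₀), x₀, hx₀, rfl⟩ hub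
  · exact le_csSup ⟨v, hub⟩ ⟨x₀, hx₀, hinf.symm⟩

theorem observationStickiness_optimal_value :
    sSup {v : ℝ | ∃ x₁ ∈ Set.Icc (0 : ℝ) 1,
        v = sInf {w : ℝ | ∃ μ : (ℝ × ℝ) →₀ ℝ,
          IsFinProbDist (Set.Icc (1/10 : ℝ) (9/10) ×ˢ Set.Icc (1/10 : ℝ) (9/10)) μ ∧
          w = expect μ (fun u => G₁ x₁ u.1 u.2)}}
      +
    sSup {v : ℝ | ∃ x₂ ∈ Set.Icc (0 : ℝ) 1,
        v = sInf {w : ℝ | ∃ μ : (ℝ × ℝ) →₀ ℝ,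
          IsFinProbDist (Set.Icc (1/10 : ℝ) (9/10) ×ˢ Set.Icc (1/10 : ℝ) (9/10)) μ ∧
          w = expect μ (fun u => G₂ x₂ u.1 u.2)}} = 719 / 10 := by
  have h1 : sSup {v : ℝ | ∃ x₁ ∈ Set.Icc (0 : ℝ) 1,
        v = sInf {w : ℝ | ∃ μ : (ℝ × ℝ) →₀ ℝ,
          IsFinProbDist (Set.Icc (1/10 : ℝ) (9/10) ×ˢ Set.Icc (1/10 : ℝ) (9/10)) μ ∧
          w = expect μ (fun u => G₁ x₁ u.1 u.2)}} = 10299/310 := by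
    apply sup_inf_eq (fun x u => G₁ x u.1 u.2) (10/31) (10299/310)
    · constructor <;> norm_num
    · rintro ⟨p, q⟩ ⟨⟨hp1, hp2⟩, ⟨hq1, hq2⟩⟩
      simp only [G₁]
      nlinarith [mul_nonneg (sub_nonneg.2 hq1) (by linarith : (0:ℝ) ≤ 349 - 50*p - 210*q)]
    · refine ⟨(9/10, 1/10), ⟨⟨by norm_num, by norm_num⟩, ⟨by norm_num, by norm_num⟩⟩, ?_⟩
      simp only [G₁]; norm_num
    · rintro x ⟨hx0, hx1⟩
      rcases le_total x (10/31) with h | h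
      · refine ⟨(9/10, 1/10), ⟨⟨by norm_num, by norm_num⟩, ⟨by norm_num, by norm_num⟩⟩, ?_⟩
        simp only [G₁]; nlinarith
      · refine ⟨(1/10, 1/10), ⟨⟨by norm_num, by norm_num⟩, ⟨by norm_num, by norm_num⟩⟩, ?_⟩
        simp only [G₁]; nlinarith
    · rintro x ⟨hx0, hx1⟩ ⟨p, q⟩ ⟨⟨hp1, hp2⟩, ⟨hq1, hq2⟩⟩
      simp only [G₁]
      nlinarith [mul_nonneg hx0 (sub_nonneg.2 hp1), mul_nonneg hx0 (sub_nonneg.2 hq1),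
        mul_nonneg (mul_nonneg hx0 (sub_nonneg.2 hp1)) (sub_nonneg.2 hq1),
        sq_nonneg q, mul_nonneg hx0 (sq_nonneg q)]
  have h2 : sSup {v : ℝ | ∃ x₂ ∈ Set.Icc (0 : ℝ) 1,
        v = sInf {w : ℝ | ∃ μ : (ℝ × ℝ) →₀ ℝ,
          IsFinProbDist (Set.Icc (1/10 : ℝ) (9/10) ×ˢ Set.Icc (1/10 : ℝ) (9/10)) μ ∧
          w = expect μ (fun u => G₂ x₂ u.1 u.2)}} = 1199/31 := by
    apply sup_inf_eq (fun x u => G₂ x u.1 u.2) (20/31) (1199/31)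
    · constructor <;> norm_num
    · rintro ⟨p, q⟩ ⟨⟨hp1, hp2⟩, ⟨hq1, hq2⟩⟩
      simp only [G₂]
      nlinarith [mul_nonneg (by linarith : (0:ℝ) ≤ 1 - q) (sub_nonneg.2 hp1),
        mul_nonneg (sub_nonneg.2 hq1) (sub_nonneg.2 hq2)]
    · refine ⟨(1/10, 1/10), ⟨⟨by norm_num, by norm_num⟩, ⟨by norm_num, by norm_num⟩⟩, ?_⟩
      simp only [G₂]; norm_num
    · rintro x ⟨hx0, hx1⟩
      rcases le_total x (20/31) with h | h
      · refine ⟨(1/10, 1/10), ⟨⟨by norm_num, by norm_num⟩, ⟨by norm_num, by norm_num⟩⟩, ?_⟩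
        simp only [G₂]; nlinarith
      · refine ⟨(1/10, 9/10), ⟨⟨by norm_num, by norm_num⟩, ⟨by norm_num, by norm_num⟩⟩, ?_⟩
        simp only [G₂]; nlinarith
    · rintro x ⟨hx0, hx1⟩ ⟨p, q⟩ ⟨⟨hp1, hp2⟩, ⟨hq1, hq2⟩⟩
      simp only [G₂]
      nlinarith [mul_nonneg hx0 (sub_nonneg.2 hp1), mul_nonneg hx0 (sub_nonneg.2 hq1),
        mul_nonneg (mul_nonneg hx0 (sub_nonneg.2 hp1)) (sub_nonneg.2 hq1),
        sq_nonneg q, mul_nonneg hx0 (sq_nonneg q)]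
  rw [h1, h2]
  norm_num
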